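/- Connected cells: let x₁, x₂ be cell points with code(x₁) ≠ code(x₂). Then the intersection of the topological closures of Ω(x₁) and Ω(x₂) contains an edge point (i.e., the two cells are connected, sharing a common edge) if and only if δ(x₁,x₂) = 2. -/

import Mathlib

noncomputable section

open Metric

abbrev Pt : Type := EuclideanSpace ℝ (Fin 2)

/-- The chromatic code of a point `x` with respect to generators `p`:
`code p x i` = #{j ≠ i : dist(x,p j) > dist(x,p i)} + (1/2)·#{j ≠ i : dist(x,p j) = dist(x,p i)}. -/
def code {n : ℕ} (p : Fin n → Pt) (x : Pt) (i : Fin n) : ℚ :=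
  (Set.ncard {j : Fin n | j ≠ i ∧ dist x (p i) < dist x (p j)} : ℚ)
  + (1/2) * (Set.ncard {j : Fin n | j ≠ i ∧ dist x (p j) = dist x (p i)} : ℚ)

/-- `{i,j}` is a tie of `x`. -/
def Tie {n : ℕ} (p : Fin n → Pt) (x : Pt) (i j : Fin n) : Prop :=
  i ≠ j ∧ dist x (p i) = dist x (p j)

/-- A cell point has no ties. -/
def CellPoint {n : ℕ} (p : Fin n → Pt) (x : Pt) : Prop :=
  ∀ i j, ¬ Tie p x i j

/-- An edge point has exactly one (unordered) tie. -/
def EdgePoint {n : ℕ} (p : Fin n → Pt) (x : Pt) : Prop :=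
  ∃ i j, Tie p x i j ∧ ∀ u v, Tie p x u v → ({u, v} : Set (Fin n)) = {i, j}

/-- A 2-I vertex point has exactly two ties, forming two disjoint pairs. -/
def Vertex2I {n : ℕ} (p : Fin n → Pt) (x : Pt) : Prop :=
  ∃ i j u v : Fin n, i ≠ j ∧ i ≠ u ∧ i ≠ v ∧ j ≠ u ∧ j ≠ v ∧ u ≠ v ∧
    Tie p x i j ∧ Tie p x u v ∧
    ∀ a b, Tie p x a b → ({a, b} : Set (Fin n)) = {i, j} ∨ ({a, b} : Set (Fin n)) = {u, v}

/-- A 3-I vertex point: its ties are exactly the three pairs contained in some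
3-element subset `{i,j,k}`. -/
def Vertex3I {n : ℕ} (p : Fin n → Pt) (x : Pt) : Prop :=
  ∃ i j k : Fin n, i ≠ j ∧ i ≠ k ∧ j ≠ k ∧
    ∀ a b, Tie p x a b ↔
      (a ≠ b ∧ a ∈ ({i, j, k} : Set (Fin n)) ∧ b ∈ ({i, j, k} : Set (Fin n)))

/-- The chromatic distance between two points. -/
def chromDist {n : ℕ} (p : Fin n → Pt) (x y : Pt) : ℚ :=
  ∑ i, |code p x i - code p y i|

/-- The spatial particle of `x`: the fiber of the chromatic code through `x`. -/
def particle {n : ℕ} (p : Fin n → Pt) (x : Pt) : Set Pt :=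
  {y | code p y = code p x}

/-- The generators are in general position: every point of the plane is one of the four
particle types, and perpendicular bisectors of distinct pairs are distinct non-parallel
lines (any two of them meet in exactly one point). -/
def GeneralPosition {n : ℕ} (p : Fin n → Pt) : Prop :=
  (∀ x : Pt, CellPoint p x ∨ EdgePoint p x ∨ Vertex2I p x ∨ Vertex3I p x) ∧
  (∀ i j u v : Fin n, i ≠ j → u ≠ v → ({i, j} : Set (Fin n)) ≠ {u, v} →
    ∃! x : Pt, dist x (p i) = dist x (p j) ∧ dist x (p u) = dist x (p v))

/-- The set `{0,1,…,n−1}` viewed inside `ℚ`. -/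
def codeRange (n : ℕ) : Set ℚ := {q | ∃ m : ℕ, m < n ∧ q = m}


namespace Aux

open RealInnerProductSpace


variable {n : ℕ} {p : Fin n → Pt}

/-- tie implies equal codes -/
lemma code_eq_of_dist_eq {x : Pt} {u v : Fin n} (huv : u ≠ v)
    (h : dist x (p u) = dist x (p v)) : code p x u = code p x v := by
  have hS : {j : Fin n | j ≠ u ∧ dist x (p u) < dist x (p j)}
      = {j : Fin n | j ≠ v ∧ dist x (p v) < dist x (p j)} := by
    ext j
    simp only [Set.mem_setOf_eq]
    constructor
    · rintro ⟨hj, hlt⟩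
      rw [h] at hlt
      exact ⟨fun e => absurd (e ▸ hlt) (lt_irrefl _), hlt⟩
    · rintro ⟨hj, hlt⟩
      rw [← h] at hlt
      exact ⟨fun e => absurd (e ▸ hlt) (lt_irrefl _), hlt⟩
  have hE : ∀ w : Fin n, dist x (p w) = dist x (p u) →
      {j : Fin n | j ≠ w ∧ dist x (p j) = dist x (p w)}
        = {j : Fin n | dist x (p j) = dist x (p u)} \ {w} := by
    intro w hw
    ext j
    simp only [Set.mem_setOf_eq, Set.mem_diff, Set.mem_singleton_iff]
    rw [hw]
    tauto
  have h1 := hE u rfl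
  have h2 := hE v h.symm
  have hu : u ∈ {j : Fin n | dist x (p j) = dist x (p u)} := rfl
  have hv : v ∈ {j : Fin n | dist x (p j) = dist x (p u)} := h.symm
  unfold code
  rw [hS, h1, h2, Set.ncard_diff_singleton_of_mem hu,
    Set.ncard_diff_singleton_of_mem hv]

/-- for a cell point, code is the ncard of the strict set -/
lemma cell_code_eq {x : Pt} (hx : CellPoint p x) (i : Fin n) :
    code p x i = ({j : Fin n | j ≠ i ∧ dist x (p i) < dist x (p j)}.ncard : ℚ) := by
  have : {j : Fin n | j ≠ i ∧ dist x (p j) = dist x (p i)} = (∅ : Set (Fin n)) := by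
    ext j; simp only [Set.mem_setOf_eq, Set.mem_empty_iff_false, iff_false, not_and]
    intro hj heq; exact hx j i ⟨hj, heq⟩
  unfold code
  rw [this, Set.ncard_empty]
  norm_num

lemma code_lt_of_dist_lt {x : Pt} (hx : CellPoint p x) {u v : Fin n}
    (h : dist x (p u) < dist x (p v)) : code p x v < code p x u := by
  rw [cell_code_eq hx, cell_code_eq hx]
  have hss : {j : Fin n | j ≠ v ∧ dist x (p v) < dist x (p j)}
      ⊂ {j : Fin n | j ≠ u ∧ dist x (p u) < dist x (p j)} := by
    constructor
    · rintro j ⟨hj, hlt⟩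
      have : dist x (p u) < dist x (p j) := h.trans hlt
      exact ⟨fun e => absurd (e ▸ this) (lt_irrefl _), this⟩
    · intro hsub
      have hv : v ∈ {j : Fin n | j ≠ u ∧ dist x (p u) < dist x (p j)} :=
        ⟨fun e => absurd (e ▸ h) (lt_irrefl _), h⟩
      have := hsub hv
      exact this.1 rfl
  exact_mod_cast Set.ncard_lt_ncard hss (Set.toFinite _)

lemma cell_dist_lt_iff {x : Pt} (hx : CellPoint p x) {u v : Fin n} (huv : u ≠ v) :
    dist x (p u) < dist x (p v) ↔ code p x v < code p x u := by
  constructor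
  · exact code_lt_of_dist_lt hx
  · intro hc
    rcases lt_trichotomy (dist x (p u)) (dist x (p v)) with h | h | h
    · exact h
    · exact absurd h (fun h => hx u v ⟨huv, h⟩)
    · exact absurd (code_lt_of_dist_lt hx h) (lt_asymm hc)

lemma cell_code_ne {x : Pt} (hx : CellPoint p x) {u v : Fin n} (huv : u ≠ v) :
    code p x u ≠ code p x v := by
  rcases lt_trichotomy (dist x (p u)) (dist x (p v)) with h | h | h
  · exact (code_lt_of_dist_lt hx h).ne'
  · exact absurd h (fun h => hx u v ⟨huv, h⟩)
  · exact (code_lt_of_dist_lt hx h).ne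

/-- a point whose comparisons dominate those of a cell point has the same code -/
lemma code_eq_of_lt_imp {x z : Pt} (hx : CellPoint p x)
    (h : ∀ u v, dist x (p u) < dist x (p v) → dist z (p u) < dist z (p v)) :
    code p z = code p x ∧ CellPoint p z := by
  have hiff : ∀ u v, dist z (p u) < dist z (p v) ↔ dist x (p u) < dist x (p v) := by
    intro u v
    constructor
    · intro hz
      by_contra hc
      have huv : u ≠ v := fun e => absurd (e ▸ hz) (lt_irrefl _)
      rcases lt_trichotomy (dist x (p u)) (dist x (p v)) with h' | h' | h'
      · exact hc h'
      · exact hx u v ⟨huv, h'⟩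
      · exact absurd (h v u h') (lt_asymm hz)
    · exact h u v
  have hcell : CellPoint p z := by
    rintro u v ⟨huv, heq⟩
    rcases lt_trichotomy (dist x (p u)) (dist x (p v)) with h' | h' | h'
    · exact absurd (h u v h') (heq ▸ lt_irrefl _)
    · exact hx u v ⟨huv, h'⟩
    · exact absurd (h v u h') (heq ▸ lt_irrefl _)
  refine ⟨funext fun i => ?_, hcell⟩
  rw [cell_code_eq hx, cell_code_eq hcell]
  congr 2
  ext j
  simp only [Set.mem_setOf_eq]
  rw [hiff]



/-- moving from a tie point toward `a` makes `a` strictly closer than `b` -/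
lemma dist_step {a b y : Pt} (hab : a ≠ b) (h : dist y a = dist y b)
    {t : ℝ} (ht : 0 < t) :
    dist (y + t • (a - y)) a < dist (y + t • (a - y)) b := by
  set z := y + t • (a - y) with hz
  have hya : y ≠ a := by
    rintro rfl
    have : dist y b = 0 := by rw [← h, dist_self]
    exact hab (dist_eq_zero.mp this)
  set d : ℝ := ‖y - a‖ with hd
  have hd0 : 0 < d := by
    rw [hd, norm_sub_pos_iff]; exact hya
  have hyb : ‖y - b‖ = d := by
    rw [hd, ← dist_eq_norm, ← dist_eq_norm, h]
  have hay : ‖a - y‖ = d := by rw [hd, norm_sub_rev]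
  have hby : ‖b - y‖ = d := by rw [← hyb, norm_sub_rev]
  have hza : z - a = (1 - t) • (y - a) := by
    rw [hz]; module
  have hzb : z - b = (y - b) + t • (a - y) := by rw [hz]; module
  have h1 : ‖z - a‖ ^ 2 = (1 - t) ^ 2 * d ^ 2 := by
    rw [hza, norm_smul, mul_pow, Real.norm_eq_abs, sq_abs, hd]
  have h2 : ‖z - b‖ ^ 2 = d ^ 2 + 2 * (t * ⟪y - b, a - y⟫) + t ^ 2 * d ^ 2 := by
    rw [hzb, norm_add_sq_real, real_inner_smul_right, norm_smul, hyb, mul_pow,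
      Real.norm_eq_abs, sq_abs, hay]
  have hkey : ⟪b - y, a - y⟫ < d * d := by
    rcases lt_or_eq_of_le (real_inner_le_norm (b - y) (a - y)) with hlt | heq
    · rw [hby, hay] at hlt; exact hlt
    · exfalso
      rw [inner_eq_norm_mul_iff_real, hby, hay] at heq
      have : b - y = a - y := smul_right_injective Pt hd0.ne' heq
      exact hab (sub_left_inj.mp this.symm)
  have hinner : ⟪y - b, a - y⟫ = - ⟪b - y, a - y⟫ := by
    rw [show y - b = -(b - y) by abel, inner_neg_left]
  have hsq : ‖z - a‖ ^ 2 < ‖z - b‖ ^ 2 := by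
    rw [h1, h2, hinner]; nlinarith
  rw [dist_eq_norm, dist_eq_norm]
  exact lt_of_pow_lt_pow_left₀ 2 (norm_nonneg _) hsq

/-- convexity of the open half-plane of points closer to `a` than to `b` -/
lemma convex_closer (a b : Pt) : Convex ℝ {z : Pt | dist z a < dist z b} := by
  have hset : {z : Pt | dist z a < dist z b}
      = {z : Pt | 2 * ⟪z, b - a⟫ < ‖b‖ ^ 2 - ‖a‖ ^ 2} := by
    ext z
    simp only [Set.mem_setOf_eq, dist_eq_norm]
    constructor
    · intro hlt
      have hsq : ‖z - a‖ ^ 2 < ‖z - b‖ ^ 2 :=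
        pow_lt_pow_left₀ hlt (norm_nonneg _) two_ne_zero
      rw [norm_sub_sq_real, norm_sub_sq_real, inner_sub_right] at *
      linarith
    · intro hlt
      have hsq : ‖z - a‖ ^ 2 < ‖z - b‖ ^ 2 := by
        rw [norm_sub_sq_real, norm_sub_sq_real]
        rw [inner_sub_right] at hlt
        linarith
      exact lt_of_pow_lt_pow_left₀ 2 (norm_nonneg _) hsq
  rw [hset]
  exact convex_halfSpace_lt
    ⟨fun x y => by rw [inner_add_left]; ring,
     fun c x => by rw [real_inner_smul_left, smul_eq_mul]; ring⟩ _

lemma isOpen_closer (a b : Pt) : IsOpen {z : Pt | dist z a < dist z b} :=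
  isOpen_lt (continuous_id.dist continuous_const) (continuous_id.dist continuous_const)


lemma mem_closure_particle {n : ℕ} {p : Fin n → Pt} {i j : Fin n}
    (hpij : p i ≠ p j) {x y : Pt} (hx : CellPoint p x)
    (hxij : dist x (p i) < dist x (p j)) (hyij : dist y (p i) = dist y (p j))
    (hnear : ∀ᶠ z in nhds y, ∀ u v, u ≠ v → ({u, v} : Set (Fin n)) ≠ {i, j} →
      dist x (p u) < dist x (p v) → dist z (p u) < dist z (p v)) :
    y ∈ closure (particle p x) := by
  have htend : Filter.Tendsto (fun t : ℝ => y + t • (p i - y)) (nhdsWithin 0 (Set.Ioi 0)) (nhds y) := by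
    have hc : Continuous (fun t : ℝ => y + t • (p i - y)) :=
      continuous_const.add (continuous_id.smul continuous_const)
    have h0 := hc.tendsto 0
    simp only [zero_smul, add_zero] at h0
    exact h0.mono_left nhdsWithin_le_nhds
  apply mem_closure_of_tendsto htend
  have h1 := htend.eventually hnear
  have h2 : ∀ᶠ t : ℝ in nhdsWithin 0 (Set.Ioi 0), t ∈ Set.Ioi (0:ℝ) :=
    eventually_mem_nhdsWithin
  filter_upwards [h1, h2] with t hR ht
  have hstep : dist (y + t • (p i - y)) (p i) < dist (y + t • (p i - y)) (p j) :=
    dist_step hpij hyij ht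
  have hdom : ∀ u v, dist x (p u) < dist x (p v) →
      dist (y + t • (p i - y)) (p u) < dist (y + t • (p i - y)) (p v) := by
    intro u v hxuv
    have huv : u ≠ v := fun e => absurd (e ▸ hxuv) (lt_irrefl _)
    by_cases hpair : ({u, v} : Set (Fin n)) = {i, j}
    · rcases Set.pair_eq_pair_iff.mp hpair with ⟨rfl, rfl⟩ | ⟨rfl, rfl⟩
      · exact hstep
      · exact absurd hxuv (lt_asymm hxij)
    · exact hR u v huv hpair hxuv
  exact (code_eq_of_lt_imp hx hdom).1


lemma arith {n : ℕ} (f g : Fin n → ℤ) (hf : Function.Injective f) (hg : Function.Injective g)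
    (hsum : ∑ l, |f l - g l| = 2)
    (hord : ¬ ∀ u v, f u < f v ↔ g u < g v) :
    ∃ i j, i ≠ j ∧
      (∀ u v, u ≠ v → ¬(u = i ∧ v = j) → ¬(u = j ∧ v = i) → (f u < f v ↔ g u < g v)) ∧
      f j < f i ∧ g i < g j := by
  classical
  set D : Fin n → ℕ := fun l => (f l - g l).natAbs with hD
  have hsumN : ∑ l, D l = 2 := by
    have : ((∑ l, D l : ℕ) : ℤ) = 2 := by
      push_cast
      rw [← hsum]
      refine Finset.sum_congr rfl fun l _ => ?_
      exact (Int.abs_eq_natAbs _).symm ▸ rfl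
    exact_mod_cast this
  -- find i with D i ≠ 0
  have hex : ∃ i, D i ≠ 0 := by
    by_contra hc
    push_neg at hc
    have : ∑ l, D l = 0 := Finset.sum_eq_zero fun l _ => hc l
    omega
  obtain ⟨i, hi⟩ := hex
  have hData : ∀ l, D l = (f l - g l).natAbs := fun l => rfl
  have hrest : ∑ l ∈ Finset.univ.erase i, D l + D i = 2 := by
    rw [Finset.sum_erase_add _ _ (Finset.mem_univ i)]; exact hsumN
  have hDi2 : D i ≤ 2 := by omega
  rcases Nat.lt_or_ge (D i) 2 with hcase | hcase
  · -- D i = 1 : two indices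
    have hDi : D i = 1 := by omega
    have hrest1 : ∑ l ∈ Finset.univ.erase i, D l = 1 := by omega
    have hexj : ∃ j ∈ Finset.univ.erase i, D j ≠ 0 := by
      by_contra hc
      push_neg at hc
      have : ∑ l ∈ Finset.univ.erase i, D l = 0 := Finset.sum_eq_zero hc
      omega
    obtain ⟨j, hjmem, hj⟩ := hexj
    have hji : j ≠ i := Finset.ne_of_mem_erase hjmem
    have hDj : D j = 1 := by
      have h1 : D j ≤ ∑ l ∈ Finset.univ.erase i, D l :=
        Finset.single_le_sum (fun l _ => Nat.zero_le _) hjmem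
      omega
    have hoff : ∀ l, l ≠ i → l ≠ j → f l = g l := by
      intro l hli hlj
      have hmem : l ∈ (Finset.univ.erase i).erase j := by
        simp [hli, hlj]
      have h0 : ∑ l ∈ (Finset.univ.erase i).erase j, D l = 0 := by
        have := Finset.sum_erase_add (Finset.univ.erase i) D hjmem
        omega
      have : D l = 0 := by
        rw [Finset.sum_eq_zero_iff] at h0
        exact h0 l hmem
      have := hData l
      omega
    have hfi : f i - g i = 1 ∨ f i - g i = -1 := by
      have := hData i; omega
    have hfj : f j - g j = 1 ∨ f j - g j = -1 := by
      have := hData j; omega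
    have hkey : ∀ u v, u ≠ v → ¬(u = i ∧ v = j) → ¬(u = j ∧ v = i) →
        (f u < f v ↔ g u < g v) := by
      intro u v huv h1 h2
      by_cases hui : u = i
      · subst hui
        have hvu : v ≠ u := Ne.symm huv
        by_cases hvj : v = j
        · exact absurd ⟨rfl, hvj⟩ h1
        · have e1 := hoff v hvu hvj
          have e2 : f v ≠ f u := fun h => hvu (hf h)
          have e3 : g v ≠ g u := fun h => hvu (hg h)
          omega
      · by_cases huj : u = j
        · subst huj
          by_cases hvi : v = i
          · exact absurd ⟨rfl, hvi⟩ h2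
          · have e1 := hoff v hvi (Ne.symm huv)
            have e2 : f v ≠ f u := fun h => huv (hf h).symm
            have e3 : g v ≠ g u := fun h => huv (hg h).symm
            omega
        · by_cases hvi : v = i
          · subst hvi
            have e1 := hoff u hui huj
            have e2 : f u ≠ f v := fun h => huv (hf h)
            have e3 : g u ≠ g v := fun h => huv (hg h)
            omega
          · by_cases hvj : v = j
            · subst hvj
              have e1 := hoff u hui huj
              have e2 : f u ≠ f v := fun h => huv (hf h)
              have e3 : g u ≠ g v := fun h => huv (hg h)
              omega
            · rw [hoff u hui huj, hoff v hvi hvj]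
    have hfij : f i ≠ f j := fun h => hji (hf h).symm
    have hgij : g i ≠ g j := fun h => hji (hg h).symm
    by_cases horder : f i < f j
    · by_cases horder2 : g i < g j
      · exfalso
        apply hord
        intro u v
        by_cases huv : u = v
        · subst huv; omega
        · by_cases hA : u = i ∧ v = j
          · obtain ⟨rfl, rfl⟩ := hA; omega
          · by_cases hB : u = j ∧ v = i
            · obtain ⟨rfl, rfl⟩ := hB; omega
            · exact hkey u v huv hA hB
      · exact ⟨j, i, hji, fun u v huv hA hB => hkey u v huv hB hA, horder, by omega⟩
    · have horder' : f j < f i := by omega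
      by_cases horder2 : g j < g i
      · exfalso
        apply hord
        intro u v
        by_cases huv : u = v
        · subst huv; omega
        · by_cases hA : u = i ∧ v = j
          · obtain ⟨rfl, rfl⟩ := hA; omega
          · by_cases hB : u = j ∧ v = i
            · obtain ⟨rfl, rfl⟩ := hB; omega
            · exact hkey u v huv hA hB
      · exact ⟨i, j, Ne.symm hji, hkey, horder', by omega⟩
  · -- D i = 2 : single index
    have hDi : D i = 2 := by omega
    have hoff : ∀ l, l ≠ i → f l = g l := by
      intro l hli
      have hmem : l ∈ Finset.univ.erase i := by simp [hli]
      have h0 : ∑ l ∈ Finset.univ.erase i, D l = 0 := by omega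
      have : D l = 0 := by
        rw [Finset.sum_eq_zero_iff] at h0
        exact h0 l hmem
      have := hData l
      omega
    have hfi : f i - g i = 2 ∨ f i - g i = -2 := by
      have := hData i; omega
    rcases hfi with hfi | hfi
    · -- g i = f i - 2
      by_cases hex2 : ∃ u, u ≠ i ∧ f u = f i - 1
      · obtain ⟨j, hji, hval⟩ := hex2
        have hgj := hoff j hji
        refine ⟨i, j, Ne.symm hji, ?_, by omega, by omega⟩
        intro u v huv h1 h2
        by_cases hui : u = i
        · subst hui
          have hvu : v ≠ u := Ne.symm huv
          by_cases hvj : v = j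
          · exact absurd ⟨rfl, hvj⟩ h1
          · have e1 := hoff v hvu
            have e2 : f v ≠ f u := fun h => hvu (hf h)
            have e3 : g v ≠ g u := fun h => hvu (hg h)
            have e4 : f v ≠ f j := fun h => hvj (hf h)
            omega
        · by_cases hvi : v = i
          · subst hvi
            have e1 := hoff u hui
            have e2 : f u ≠ f v := fun h => huv (hf h)
            have e3 : g u ≠ g v := fun h => huv (hg h)
            have e4 : f u ≠ f j := by
              intro h
              have : u = j := hf h
              subst this
              exact h2 ⟨rfl, rfl⟩
            omega
          · rw [hoff u hui, hoff v hvi]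
      · exfalso
        apply hord
        push_neg at hex2
        intro u v
        by_cases huv : u = v
        · subst huv; omega
        · by_cases hui : u = i
          · subst hui
            have hvu : v ≠ u := Ne.symm huv
            have e1 := hoff v hvu
            have e2 : f v ≠ f u := fun h => hvu (hf h)
            have e3 : g v ≠ g u := fun h => hvu (hg h)
            have e4 := hex2 v hvu
            omega
          · by_cases hvi : v = i
            · subst hvi
              have e1 := hoff u hui
              have e2 : f u ≠ f v := fun h => huv (hf h)
              have e3 : g u ≠ g v := fun h => huv (hg h)
              have e4 := hex2 u hui
              omega
            · rw [hoff u hui, hoff v hvi]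
    · -- g i = f i + 2
      by_cases hex2 : ∃ u, u ≠ i ∧ f u = f i + 1
      · obtain ⟨j, hji, hval⟩ := hex2
        have hgj := hoff j hji
        refine ⟨j, i, hji, ?_, by omega, by omega⟩
        intro u v huv h1 h2
        by_cases hui : u = i
        · subst hui
          have hvu : v ≠ u := Ne.symm huv
          by_cases hvj : v = j
          · exact absurd ⟨rfl, hvj⟩ h2
          · have e1 := hoff v hvu
            have e2 : f v ≠ f u := fun h => hvu (hf h)
            have e3 : g v ≠ g u := fun h => hvu (hg h)
            have e4 : f v ≠ f j := fun h => hvj (hf h)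
            omega
        · by_cases hvi : v = i
          · subst hvi
            have e1 := hoff u hui
            have e2 : f u ≠ f v := fun h => huv (hf h)
            have e3 : g u ≠ g v := fun h => huv (hg h)
            have e4 : f u ≠ f j := by
              intro h
              have : u = j := hf h
              subst this
              exact h1 ⟨rfl, rfl⟩
            omega
          · rw [hoff u hui, hoff v hvi]
      · exfalso
        apply hord
        push_neg at hex2
        intro u v
        by_cases huv : u = v
        · subst huv; omega
        · by_cases hui : u = i
          · subst hui
            have hvu : v ≠ u := Ne.symm huv
            have e1 := hoff v hvu
            have e2 : f v ≠ f u := fun h => hvu (hf h)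
            have e3 : g v ≠ g u := fun h => hvu (hg h)
            have e4 := hex2 v hvu
            omega
          · by_cases hvi : v = i
            · subst hvi
              have e1 := hoff u hui
              have e2 : f u ≠ f v := fun h => huv (hf h)
              have e3 : g u ≠ g v := fun h => huv (hg h)
              have e4 := hex2 u hui
              omega
            · rw [hoff u hui, hoff v hvi]



lemma code_near_edge {i j : Fin n} (hij : i ≠ j) {y z : Pt}
    (hty : dist y (p i) = dist y (p j)) (hz : CellPoint p z)
    (hzy : ∀ u v, u ≠ v → ({u, v} : Set (Fin n)) ≠ {i, j} →
      (dist z (p u) < dist z (p v) ↔ dist y (p u) < dist y (p v)))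
    (hzij : dist z (p i) < dist z (p j)) :
    code p z i = ({m : Fin n | m ≠ i ∧ m ≠ j ∧ dist y (p i) < dist y (p m)}.ncard : ℚ) + 1 ∧
    code p z j = ({m : Fin n | m ≠ i ∧ m ≠ j ∧ dist y (p i) < dist y (p m)}.ncard : ℚ) ∧
    ∀ l, l ≠ i → l ≠ j →
      code p z l = ({m : Fin n | m ≠ l ∧ dist y (p l) < dist y (p m)}.ncard : ℚ) := by
  set T : Set (Fin n) := {m : Fin n | m ≠ i ∧ m ≠ j ∧ dist y (p i) < dist y (p m)} with hT
  refine ⟨?_, ?_, ?_⟩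
  · rw [cell_code_eq hz i]
    have hset : {m : Fin n | m ≠ i ∧ dist z (p i) < dist z (p m)} = insert j T := by
      ext m
      simp only [Set.mem_setOf_eq, Set.mem_insert_iff, hT]
      constructor
      · rintro ⟨hmi, hlt⟩
        by_cases hmj : m = j
        · exact Or.inl hmj
        · refine Or.inr ⟨hmi, hmj, ?_⟩
          have hpair : ({i, m} : Set (Fin n)) ≠ {i, j} := by
            intro hpe
            rcases Set.pair_eq_pair_iff.mp hpe with ⟨_, h2⟩ | ⟨h1, _⟩
            · exact hmj h2
            · exact hij h1
          exact (hzy i m (Ne.symm hmi) hpair).mp hlt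
      · rintro (rfl | ⟨hmi, hmj, hlt⟩)
        · exact ⟨Ne.symm hij, hzij⟩
        · refine ⟨hmi, ?_⟩
          have hpair : ({i, m} : Set (Fin n)) ≠ {i, j} := by
            intro hpe
            rcases Set.pair_eq_pair_iff.mp hpe with ⟨_, h2⟩ | ⟨h1, _⟩
            · exact hmj h2
            · exact hij h1
          exact (hzy i m (Ne.symm hmi) hpair).mpr hlt
    rw [hset, Set.ncard_insert_of_notMem (by simp [hT]) (Set.toFinite _)]
    push_cast
    ring
  · rw [cell_code_eq hz j]
    have hset : {m : Fin n | m ≠ j ∧ dist z (p j) < dist z (p m)} = T := by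
      ext m
      simp only [Set.mem_setOf_eq, hT]
      constructor
      · rintro ⟨hmj, hlt⟩
        have hmi : m ≠ i := by
          rintro rfl
          exact lt_asymm hzij hlt
        have hpair : ({j, m} : Set (Fin n)) ≠ {i, j} := by
          intro hpe
          rcases Set.pair_eq_pair_iff.mp hpe with ⟨h1, _⟩ | ⟨_, h2⟩
          · exact hij h1.symm
          · exact hmi h2
        have := (hzy j m (Ne.symm hmj) hpair).mp hlt
        exact ⟨hmi, hmj, hty ▸ this⟩
      · rintro ⟨hmi, hmj, hlt⟩
        have hpair : ({j, m} : Set (Fin n)) ≠ {i, j} := by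
          intro hpe
          rcases Set.pair_eq_pair_iff.mp hpe with ⟨h1, _⟩ | ⟨_, h2⟩
          · exact hij h1.symm
          · exact hmi h2
        rw [hty] at hlt
        exact ⟨hmj, (hzy j m (Ne.symm hmj) hpair).mpr hlt⟩
    rw [hset]
  · intro l hli hlj
    rw [cell_code_eq hz l]
    have hset : {m : Fin n | m ≠ l ∧ dist z (p l) < dist z (p m)}
        = {m : Fin n | m ≠ l ∧ dist y (p l) < dist y (p m)} := by
      ext m
      simp only [Set.mem_setOf_eq]
      constructor
      · rintro ⟨hml, hlt⟩
        refine ⟨hml, ?_⟩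
        have hpair : ({l, m} : Set (Fin n)) ≠ {i, j} := by
          intro hpe
          rcases Set.pair_eq_pair_iff.mp hpe with ⟨h1, _⟩ | ⟨h1, _⟩
          · exact hli h1
          · exact hlj h1
        exact (hzy l m (Ne.symm hml) hpair).mp hlt
      · rintro ⟨hml, hlt⟩
        refine ⟨hml, ?_⟩
        have hpair : ({l, m} : Set (Fin n)) ≠ {i, j} := by
          intro hpe
          rcases Set.pair_eq_pair_iff.mp hpe with ⟨h1, _⟩ | ⟨h1, _⟩
          · exact hli h1
          · exact hlj h1
        exact (hzy l m (Ne.symm hml) hpair).mpr hlt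
    rw [hset]

lemma chrom_eq_two {i j : Fin n} (hij : i ≠ j) {y z w : Pt}
    (hty : dist y (p i) = dist y (p j)) (hz : CellPoint p z) (hw : CellPoint p w)
    (hzy : ∀ u v, u ≠ v → ({u, v} : Set (Fin n)) ≠ {i, j} →
      (dist z (p u) < dist z (p v) ↔ dist y (p u) < dist y (p v)))
    (hwy : ∀ u v, u ≠ v → ({u, v} : Set (Fin n)) ≠ {i, j} →
      (dist w (p u) < dist w (p v) ↔ dist y (p u) < dist y (p v)))
    (hzij : dist z (p i) < dist z (p j)) (hwij : dist w (p j) < dist w (p i)) :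
    (∑ l, |code p z l - code p w l|) = 2 := by
  obtain ⟨hz1, hz2, hz3⟩ := code_near_edge hij hty hz hzy hzij
  have hwy' : ∀ u v, u ≠ v → ({u, v} : Set (Fin n)) ≠ {j, i} →
      (dist w (p u) < dist w (p v) ↔ dist y (p u) < dist y (p v)) := by
    intro u v huv hpair
    exact hwy u v huv (by rwa [Set.pair_comm j i] at hpair)
  obtain ⟨hw1, hw2, hw3⟩ := code_near_edge hij.symm hty.symm hw hwy' hwij
  have hTsym : {m : Fin n | m ≠ j ∧ m ≠ i ∧ dist y (p j) < dist y (p m)}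
      = {m : Fin n | m ≠ i ∧ m ≠ j ∧ dist y (p i) < dist y (p m)} := by
    ext m
    simp only [Set.mem_setOf_eq]
    constructor
    · rintro ⟨h1, h2, h3⟩; exact ⟨h2, h1, by rwa [hty]⟩
    · rintro ⟨h1, h2, h3⟩; exact ⟨h2, h1, by rwa [← hty]⟩
  rw [hTsym] at hw1 hw2
  have hfun : ∀ l, |code p z l - code p w l|
      = (if l = i then (1:ℚ) else 0) + (if l = j then (1:ℚ) else 0) := by
    intro l
    by_cases hli : l = i
    · subst hli
      rw [hz1, hw2, if_pos rfl, if_neg hij]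
      norm_num
    · by_cases hlj : l = j
      · subst hlj
        rw [hz2, hw1, if_neg hli, if_pos rfl]
        norm_num
      · rw [hz3 l hli hlj, hw3 l hlj hli, if_neg hli, if_neg hlj, sub_self, abs_zero]
        norm_num
  rw [Finset.sum_congr rfl (fun l _ => hfun l), Finset.sum_add_distrib]
  rw [Finset.sum_ite_eq' Finset.univ i (fun _ => (1:ℚ)),
    Finset.sum_ite_eq' Finset.univ j (fun _ => (1:ℚ))]
  norm_num


end Aux

/-- connected cells: two cells `Ω(x₁) ≠ Ω(x₂)` share a common edge (their
closures meet in an edge point) iff `δ(x₁,x₂) = 2`. -/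
theorem connected_cells {n : ℕ} (hn : 2 ≤ n) (p : Fin n → Pt)
    (hp : Function.Injective p) (x₁ x₂ : Pt)
    (hx₁ : CellPoint p x₁) (hx₂ : CellPoint p x₂) (hne : code p x₁ ≠ code p x₂) :
    (∃ y : Pt, EdgePoint p y ∧
        y ∈ closure (particle p x₁) ∩ closure (particle p x₂)) ↔
      chromDist p x₁ x₂ = 2 := by
  constructor
  · -- forward: an adjacent edge point forces chromatic distance 2
    rintro ⟨y, ⟨i, j, ⟨hij, htie⟩, huniq⟩, hy₁, hy₂⟩
    have hstab : ∀ᶠ z in nhds y, ∀ u v : Fin n,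
        dist y (p u) < dist y (p v) → dist z (p u) < dist z (p v) := by
      refine Filter.eventually_all.mpr fun u => Filter.eventually_all.mpr fun v => ?_
      by_cases h : dist y (p u) < dist y (p v)
      · filter_upwards [(Aux.isOpen_closer (p u) (p v)).mem_nhds h] with z hzm
        exact fun _ => hzm
      · exact Filter.Eventually.of_forall fun z h' => absurd h' h
    rw [mem_closure_iff_nhds] at hy₁ hy₂
    obtain ⟨z, hzstab, hz₁⟩ := hy₁ _ hstab
    obtain ⟨w, hwstab, hw₁⟩ := hy₂ _ hstab
    have hcz : code p z = code p x₁ := hz₁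
    have hcw : code p w = code p x₂ := hw₁
    have hzc : CellPoint p z := by
      rintro u v ⟨huv, heq⟩
      exact Aux.cell_code_ne hx₁ huv
        ((congrFun hcz u).symm.trans ((Aux.code_eq_of_dist_eq huv heq).trans (congrFun hcz v)))
    have hwc : CellPoint p w := by
      rintro u v ⟨huv, heq⟩
      exact Aux.cell_code_ne hx₂ huv
        ((congrFun hcw u).symm.trans ((Aux.code_eq_of_dist_eq huv heq).trans (congrFun hcw v)))
    have hnotie : ∀ u v : Fin n, u ≠ v → ({u, v} : Set (Fin n)) ≠ {i, j} →
        dist y (p u) ≠ dist y (p v) :=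
      fun u v huv hpair heq => hpair (huniq u v ⟨huv, heq⟩)
    have hmk : ∀ z' : Pt,
        (∀ u v : Fin n, dist y (p u) < dist y (p v) → dist z' (p u) < dist z' (p v)) →
        ∀ u v, u ≠ v → ({u, v} : Set (Fin n)) ≠ {i, j} →
        (dist z' (p u) < dist z' (p v) ↔ dist y (p u) < dist y (p v)) := by
      intro z' hst u v huv hpair
      constructor
      · intro hlt
        rcases lt_trichotomy (dist y (p u)) (dist y (p v)) with h | h | h
        · exact h
        · exact absurd h (hnotie u v huv hpair)
        · exact absurd (hst v u h) (lt_asymm hlt)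
      · exact hst u v
    have hzy := hmk z hzstab
    have hwy := hmk w hwstab
    have hzij : dist z (p i) ≠ dist z (p j) := fun e => hzc i j ⟨hij, e⟩
    have hwij : dist w (p i) ≠ dist w (p j) := fun e => hwc i j ⟨hij, e⟩
    have hsame : (dist z (p i) < dist z (p j) ↔ dist w (p i) < dist w (p j)) → False := by
      intro hside
      apply hne
      rw [← hcz, ← hcw]
      have hdom : ∀ u v, dist w (p u) < dist w (p v) → dist z (p u) < dist z (p v) := by
        intro u v hlt
        have huv : u ≠ v := fun e => absurd (e ▸ hlt) (lt_irrefl _)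
        by_cases hpair : ({u, v} : Set (Fin n)) = {i, j}
        · rcases Set.pair_eq_pair_iff.mp hpair with ⟨he1, he2⟩ | ⟨he1, he2⟩
          · rw [he1, he2]
            rw [he1, he2] at hlt
            exact hside.mpr hlt
          · rw [he1, he2]
            rw [he1, he2] at hlt
            have hA : ¬ dist z (p i) < dist z (p j) := fun h => (lt_asymm hlt) (hside.mp h)
            rcases lt_trichotomy (dist z (p i)) (dist z (p j)) with h | h | h
            · exact absurd h hA
            · exact absurd h hzij
            · exact h
        · exact (hzy u v huv hpair).mpr ((hwy u v huv hpair).mp hlt)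
      exact (Aux.code_eq_of_lt_imp hwc hdom).1
    have hrw : chromDist p x₁ x₂ = ∑ l, |code p z l - code p w l| := by
      unfold chromDist
      exact Finset.sum_congr rfl fun l _ => by rw [congrFun hcz l, congrFun hcw l]
    rcases lt_or_gt_of_ne hzij with hzlt | hzgt
    · have hwlt : dist w (p j) < dist w (p i) := by
        rcases lt_trichotomy (dist w (p i)) (dist w (p j)) with h | h | h
        · exact absurd ⟨fun _ => h, fun _ => hzlt⟩ hsame
        · exact absurd h hwij
        · exact h
      rw [hrw]
      exact Aux.chrom_eq_two hij htie hzc hwc hzy hwy hzlt hwlt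
    · have hwlt : dist w (p i) < dist w (p j) := by
        rcases lt_trichotomy (dist w (p i)) (dist w (p j)) with h | h | h
        · exact h
        · exact absurd h hwij
        · exact absurd ⟨fun hh => absurd hh (lt_asymm hzgt), fun hh => absurd hh (lt_asymm h)⟩ hsame
      rw [hrw]
      have hzy' : ∀ u v, u ≠ v → ({u, v} : Set (Fin n)) ≠ {j, i} →
          (dist z (p u) < dist z (p v) ↔ dist y (p u) < dist y (p v)) := by
        intro u v huv hpair
        exact hzy u v huv (by rwa [Set.pair_comm j i] at hpair)
      have hwy' : ∀ u v, u ≠ v → ({u, v} : Set (Fin n)) ≠ {j, i} →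
          (dist w (p u) < dist w (p v) ↔ dist y (p u) < dist y (p v)) := by
        intro u v huv hpair
        exact hwy u v huv (by rwa [Set.pair_comm j i] at hpair)
      exact Aux.chrom_eq_two hij.symm htie.symm hzc hwc hzy' hwy' hzgt hwlt
  · -- backward: chromatic distance 2 produces a shared edge point
    intro hδ
    set a : Fin n → ℕ := fun l => {m : Fin n | m ≠ l ∧ dist x₁ (p l) < dist x₁ (p m)}.ncard with ha
    set b : Fin n → ℕ := fun l => {m : Fin n | m ≠ l ∧ dist x₂ (p l) < dist x₂ (p m)}.ncard with hb
    have hca : ∀ l, code p x₁ l = (a l : ℚ) := fun l => Aux.cell_code_eq hx₁ l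
    have hcb : ∀ l, code p x₂ l = (b l : ℚ) := fun l => Aux.cell_code_eq hx₂ l
    have hsumZ : ∑ l, |(a l : ℤ) - (b l : ℤ)| = 2 := by
      have h1 : ((∑ l, |(a l : ℤ) - (b l : ℤ)| : ℤ) : ℚ) = 2 := by
        push_cast
        rw [← hδ]
        unfold chromDist
        exact Finset.sum_congr rfl fun l _ => by rw [hca l, hcb l]
      exact_mod_cast h1
    have hfinj : Function.Injective (fun l => (a l : ℤ)) := by
      intro u v h
      by_contra huv
      apply Aux.cell_code_ne hx₁ huv
      rw [hca u, hca v]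
      have h' : (a u : ℤ) = (a v : ℤ) := h
      exact_mod_cast h'
    have hginj : Function.Injective (fun l => (b l : ℤ)) := by
      intro u v h
      by_contra huv
      apply Aux.cell_code_ne hx₂ huv
      rw [hcb u, hcb v]
      have h' : (b u : ℤ) = (b v : ℤ) := h
      exact_mod_cast h'
    have hord : ¬ ∀ u v, (a u : ℤ) < (a v : ℤ) ↔ (b u : ℤ) < (b v : ℤ) := by
      intro hall
      apply hne
      have hdom : ∀ u v, dist x₂ (p u) < dist x₂ (p v) → dist x₁ (p u) < dist x₁ (p v) := by
        intro u v hlt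
        have huv : u ≠ v := fun e => absurd (e ▸ hlt) (lt_irrefl _)
        rw [Aux.cell_dist_lt_iff hx₂ huv] at hlt
        rw [Aux.cell_dist_lt_iff hx₁ huv, hca u, hca v]
        rw [hcb u, hcb v] at hlt
        have h2 : (b v : ℤ) < (b u : ℤ) := by exact_mod_cast hlt
        have h3 : (a v : ℤ) < (a u : ℤ) := (hall v u).mpr h2
        exact_mod_cast h3
      exact (Aux.code_eq_of_lt_imp hx₂ hdom).1
    obtain ⟨i, j, hij, hkey, hfji, hgij⟩ :=
      Aux.arith (fun l => (a l : ℤ)) (fun l => (b l : ℤ)) hfinj hginj hsumZ hord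
    have hfji' : (a j : ℤ) < (a i : ℤ) := hfji
    have hgij' : (b i : ℤ) < (b j : ℤ) := hgij
    have horder₁ : dist x₁ (p i) < dist x₁ (p j) := by
      rw [Aux.cell_dist_lt_iff hx₁ hij, hca i, hca j]
      exact_mod_cast hfji'
    have horder₂ : dist x₂ (p j) < dist x₂ (p i) := by
      rw [Aux.cell_dist_lt_iff hx₂ hij.symm, hcb i, hcb j]
      exact_mod_cast hgij'
    have hagree : ∀ u v : Fin n, u ≠ v → ({u, v} : Set (Fin n)) ≠ {i, j} →
        (dist x₁ (p u) < dist x₁ (p v) ↔ dist x₂ (p u) < dist x₂ (p v)) := by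
      intro u v huv hpair
      have h1 : ¬(v = i ∧ u = j) := by
        rintro ⟨rfl, rfl⟩
        exact hpair (Set.pair_comm u v)
      have h2 : ¬(v = j ∧ u = i) := by
        rintro ⟨rfl, rfl⟩
        exact hpair rfl
      rw [Aux.cell_dist_lt_iff hx₁ huv, Aux.cell_dist_lt_iff hx₂ huv,
        hca u, hca v, hcb u, hcb v]
      have hk : ((a v : ℤ) < (a u : ℤ) ↔ (b v : ℤ) < (b u : ℤ)) :=
        hkey v u (Ne.symm huv) h1 h2
      constructor
      · intro h
        have h' : (a v : ℤ) < (a u : ℤ) := by exact_mod_cast h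
        have h'' := hk.mp h'
        exact_mod_cast h''
      · intro h
        have h' : (b v : ℤ) < (b u : ℤ) := by exact_mod_cast h
        have h'' := hk.mpr h'
        exact_mod_cast h''
    set R : Set Pt := {z : Pt | ∀ u v : Fin n, u ≠ v → ({u, v} : Set (Fin n)) ≠ {i, j} →
        dist x₁ (p u) < dist x₁ (p v) → dist z (p u) < dist z (p v)} with hR
    have hReq : R = ⋂ (u : Fin n), ⋂ (v : Fin n),
        {z : Pt | (u ≠ v ∧ ({u, v} : Set (Fin n)) ≠ {i, j} ∧ dist x₁ (p u) < dist x₁ (p v)) →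
          dist z (p u) < dist z (p v)} := by
      ext z
      simp only [hR, Set.mem_setOf_eq, Set.mem_iInter]
      constructor
      · rintro h u v ⟨h1, h2, h3⟩
        exact h u v h1 h2 h3
      · intro h u v h1 h2 h3
        exact h u v ⟨h1, h2, h3⟩
    have hpiece : ∀ u v : Fin n,
        IsOpen {z : Pt | (u ≠ v ∧ ({u, v} : Set (Fin n)) ≠ {i, j} ∧
            dist x₁ (p u) < dist x₁ (p v)) → dist z (p u) < dist z (p v)} ∧
        Convex ℝ {z : Pt | (u ≠ v ∧ ({u, v} : Set (Fin n)) ≠ {i, j} ∧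
            dist x₁ (p u) < dist x₁ (p v)) → dist z (p u) < dist z (p v)} := by
      intro u v
      by_cases hc : u ≠ v ∧ ({u, v} : Set (Fin n)) ≠ {i, j} ∧ dist x₁ (p u) < dist x₁ (p v)
      · have he : {z : Pt | (u ≠ v ∧ ({u, v} : Set (Fin n)) ≠ {i, j} ∧
            dist x₁ (p u) < dist x₁ (p v)) → dist z (p u) < dist z (p v)}
            = {z : Pt | dist z (p u) < dist z (p v)} := by
          ext z
          simp only [Set.mem_setOf_eq]
          exact ⟨fun h => h hc, fun h _ => h⟩
        rw [he]
        exact ⟨Aux.isOpen_closer _ _, Aux.convex_closer _ _⟩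
      · have he : {z : Pt | (u ≠ v ∧ ({u, v} : Set (Fin n)) ≠ {i, j} ∧
            dist x₁ (p u) < dist x₁ (p v)) → dist z (p u) < dist z (p v)}
            = Set.univ := by
          ext z
          simp only [Set.mem_setOf_eq, Set.mem_univ, iff_true]
          exact fun h => absurd h hc
        rw [he]
        exact ⟨isOpen_univ, convex_univ⟩
    have hRopen : IsOpen R := by
      rw [hReq]
      exact isOpen_iInter_of_finite fun u => isOpen_iInter_of_finite fun v => (hpiece u v).1
    have hRconvex : Convex ℝ R := by
      rw [hReq]
      exact convex_iInter fun u => convex_iInter fun v => (hpiece u v).2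
    have hx₁R : x₁ ∈ R := fun u v _ _ h => h
    have hx₂R : x₂ ∈ R := fun u v h1 h2 h3 => (hagree u v h1 h2).mp h3
    set γ : ℝ → Pt := fun t => x₁ + t • (x₂ - x₁) with hγ
    have hγc : Continuous γ := continuous_const.add (continuous_id.smul continuous_const)
    set F : ℝ → ℝ := fun t => dist (γ t) (p i) - dist (γ t) (p j) with hF
    have hFc : Continuous F := (hγc.dist continuous_const).sub (hγc.dist continuous_const)
    have hγ0 : γ 0 = x₁ := by simp [hγ]
    have hγ1 : γ 1 = x₂ := by simp [hγ]
    have hF0 : F 0 < 0 := by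
      simp only [hF, hγ0]
      exact sub_neg.mpr horder₁
    have hF1 : 0 < F 1 := by
      simp only [hF, hγ1]
      exact sub_pos.mpr horder₂
    obtain ⟨t₀, ht₀, hFt₀⟩ :=
      intermediate_value_Icc zero_le_one hFc.continuousOn ⟨le_of_lt hF0, le_of_lt hF1⟩
    set y : Pt := γ t₀ with hy
    have hyR : y ∈ R := by
      have hconv : γ t₀ = (1 - t₀) • x₁ + t₀ • x₂ := by
        rw [hγ]
        module
      rw [hy, hconv]
      exact hRconvex hx₁R hx₂R (by linarith [ht₀.2]) ht₀.1 (by ring)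
    have hytie : dist y (p i) = dist y (p j) := sub_eq_zero.mp hFt₀
    have hstrict : ∀ u v : Fin n, u ≠ v → ({u, v} : Set (Fin n)) ≠ {i, j} →
        dist y (p u) ≠ dist y (p v) := by
      intro u v huv hpair heq
      rcases lt_trichotomy (dist x₁ (p u)) (dist x₁ (p v)) with h | h | h
      · exact absurd heq (hyR u v huv hpair h).ne
      · exact hx₁ u v ⟨huv, h⟩
      · have hpair' : ({v, u} : Set (Fin n)) ≠ {i, j} := by rwa [Set.pair_comm]
        exact absurd heq.symm (hyR v u (Ne.symm huv) hpair' h).ne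
    have hyE : EdgePoint p y := by
      refine ⟨i, j, ⟨hij, hytie⟩, ?_⟩
      rintro u v ⟨huv, heq⟩
      by_contra hpair
      exact hstrict u v huv hpair heq
    have hnear : ∀ᶠ z in nhds y, z ∈ R := hRopen.eventually_mem hyR
    have hmem₁ : y ∈ closure (particle p x₁) := by
      refine Aux.mem_closure_particle (hp.ne hij) hx₁ horder₁ hytie ?_
      filter_upwards [hnear] with z hz
      exact fun u v h1 h2 h3 => hz u v h1 h2 h3
    have hmem₂ : y ∈ closure (particle p x₂) := by
      refine Aux.mem_closure_particle (hp.ne hij.symm) hx₂ horder₂ hytie.symm ?_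
      filter_upwards [hnear] with z hz
      intro u v h1 h2 h3
      have h2' : ({u, v} : Set (Fin n)) ≠ {i, j} := by
        rw [Set.pair_comm i j]
        exact h2
      exact hz u v h1 h2' ((hagree u v h1 h2').mpr h3)
    exact ⟨y, hyE, hmem₁, hmem₂⟩
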